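/- Given two triples (F₁, P_F, P_B₁) and (F₂, P_F, P_B₂) both satisfying detailed balance on a finite connected DAG (every state reachable from s_0 via positive-probability P_F edges) with the same boundary condition F₁(x) = F₂(x) = R(x) on terminal states, it follows that F₁ = F₂ and P_B₁ = P_B₂ everywhere. -/
import Mathlib


/-- Given two triples `(F₁, PF, PB₁)` and `(F₂, PF, PB₂)` both
satisfying detailed balance on a finite connected DAG (every state reachable from
`s0` via positive-probability `PF`-edges), with the same boundary condition
`F₁ x = F₂ x = R x` on terminal states, it follows that `F₁ = F₂` and `PB₁ = PB₂`
everywhere.  Here `PB s s' = P_B(s|s')`, backward policies are nonnegative, vanish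
off edges and sum to 1 over parents of each noninitial state. -/
theorem stmt_17 {S : Type*} [Fintype S]
    (A : S → S → Prop) [DecidableRel A]
    (hacyc : ∀ s, ¬ Relation.TransGen A s s)
    (s0 : S) (hinit : ∀ s, ¬ A s s0)
    (hreach : ∀ s, Relation.ReflTransGen A s0 s)
    (PF : S → S → ℝ)
    (hPFpos : ∀ s s', A s s' → 0 < PF s s')
    (hPFsum : ∀ s, (∃ s', A s s') →
      ∑ s' ∈ Finset.univ.filter (fun s' => A s s'), PF s s' = 1)
    (R : S → ℝ)
    (F₁ F₂ : S → ℝ) (PB₁ PB₂ : S → S → ℝ)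
    (hF₁pos : ∀ s, 0 < F₁ s) (hF₂pos : ∀ s, 0 < F₂ s)
    (hPB₁nonneg : ∀ s s', 0 ≤ PB₁ s s') (hPB₂nonneg : ∀ s s', 0 ≤ PB₂ s s')
    (hPB₁supp : ∀ s s', ¬ A s s' → PB₁ s s' = 0)
    (hPB₂supp : ∀ s s', ¬ A s s' → PB₂ s s' = 0)
    (hPB₁sum : ∀ s', s' ≠ s0 →
      ∑ s ∈ Finset.univ.filter (fun s => A s s'), PB₁ s s' = 1)
    (hPB₂sum : ∀ s', s' ≠ s0 →
      ∑ s ∈ Finset.univ.filter (fun s => A s s'), PB₂ s s' = 1)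
    (hDB₁ : ∀ s s', A s s' → F₁ s * PF s s' = F₁ s' * PB₁ s s')
    (hDB₂ : ∀ s s', A s s' → F₂ s * PF s s' = F₂ s' * PB₂ s s')
    (hbound : ∀ x, (∀ s', ¬ A x s') → F₁ x = R x ∧ F₂ x = R x) :
    F₁ = F₂ ∧ PB₁ = PB₂ := by
  haveI : IsTrans S (Relation.TransGen A) := ⟨fun _ _ _ => Relation.TransGen.trans⟩
  haveI : IsIrrefl S (Relation.TransGen A) := ⟨hacyc⟩
  have hwf : WellFounded (Relation.TransGen A) :=
    Finite.wellFounded_of_trans_of_irrefl _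
  set c : ℝ := F₁ s0 / F₂ s0 with hc
  have key : ∀ s, F₁ s = c * F₂ s := by
    intro s
    induction s using hwf.induction with
    | _ s ih =>
      by_cases hs : s = s0
      · subst hs
        rw [hc]
        exact (div_mul_cancel₀ _ (ne_of_gt (hF₂pos _))).symm
      · have h1 : F₁ s = ∑ p ∈ Finset.univ.filter (fun p => A p s), F₁ p * PF p s := by
          calc F₁ s = F₁ s * ∑ p ∈ Finset.univ.filter (fun p => A p s), PB₁ p s := by
                rw [hPB₁sum s hs]; ring
            _ = ∑ p ∈ Finset.univ.filter (fun p => A p s), F₁ s * PB₁ p s :=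
                Finset.mul_sum _ _ _
            _ = ∑ p ∈ Finset.univ.filter (fun p => A p s), F₁ p * PF p s :=
                Finset.sum_congr rfl fun p hp =>
                  (hDB₁ p s (Finset.mem_filter.mp hp).2).symm
        have h2 : F₂ s = ∑ p ∈ Finset.univ.filter (fun p => A p s), F₂ p * PF p s := by
          calc F₂ s = F₂ s * ∑ p ∈ Finset.univ.filter (fun p => A p s), PB₂ p s := by
                rw [hPB₂sum s hs]; ring
            _ = ∑ p ∈ Finset.univ.filter (fun p => A p s), F₂ s * PB₂ p s :=
                Finset.mul_sum _ _ _
            _ = ∑ p ∈ Finset.univ.filter (fun p => A p s), F₂ p * PF p s :=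
                Finset.sum_congr rfl fun p hp =>
                  (hDB₂ p s (Finset.mem_filter.mp hp).2).symm
        rw [h1, h2, Finset.mul_sum]
        refine Finset.sum_congr rfl fun p hp => ?_
        rw [ih p (Relation.TransGen.single (Finset.mem_filter.mp hp).2)]; ring
  -- existence of a terminal state
  haveI : IsTrans S (fun a b => Relation.TransGen A b a) :=
    ⟨fun _ _ _ h h' => Relation.TransGen.trans h' h⟩
  haveI : IsIrrefl S (fun a b => Relation.TransGen A b a) := ⟨hacyc⟩
  have hwf2 : WellFounded (fun a b => Relation.TransGen A b a) :=
    Finite.wellFounded_of_trans_of_irrefl _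
  obtain ⟨x, -, hx⟩ := hwf2.has_min Set.univ ⟨s0, trivial⟩
  have hterm : ∀ s', ¬ A x s' := fun s' h =>
    hx s' trivial (Relation.TransGen.single h)
  obtain ⟨hb1, hb2⟩ := hbound x hterm
  have hc1 : c = 1 := by
    have := key x
    rw [hb1, hb2] at this
    have hR : 0 < R x := hb2 ▸ hF₂pos x
    field_simp at this
    nlinarith
  have hF : F₁ = F₂ := by
    funext s; rw [key s, hc1, one_mul]
  refine ⟨hF, ?_⟩
  funext s s'
  by_cases h : A s s'
  · have e1 := hDB₁ s s' h
    have e2 := hDB₂ s s' h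
    rw [hF] at e1
    have := e1.symm.trans e2
    exact mul_left_cancel₀ (ne_of_gt (hF₂pos s')) this
  · rw [hPB₁supp s s' h, hPB₂supp s s' h]
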